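/- Assume: (i) p is a non-zero-divisor in A; (ii) A is integrally closed in A[1/p]; (iii) the Frobenius endomorphism of A/pA is surjective; (iv) there exists a sequence (p_n)_{n ≥ 0} of elements of A with p_0 = p and p_{n+1}^p = p_n for all n ≥ 0. Let ϖ ∈ A^♭ be the element whose component of index n is p_n mod p, and set ξ = [ϖ] − p ∈ W(A^♭), where [ ] is the Teichmüller (multiplicative) representative. Then there is a unique ring homomorphism θ : W(A^♭) → Â such that for every n ≥ 1 the composite of θ with the projection Â → A/p^nA equals θ_n ∘ ν_n, and the sequence 0 → W(A^♭) → W(A^♭) → Â → 0, with first map multiplication by ξ and second map θ, is exact: multiplication by ξ is injective on W(A^♭), θ is surjective, and ker(θ) = ξ·W(A^♭). -/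

import Mathlib

set_option linter.unusedSectionVars false
set_option synthInstance.maxHeartbeats 1000000
set_option maxHeartbeats 1000000

/-- The canonical projection `A ⧸ (a) → A ⧸ (b)` when `b ∣ a`. -/
def qfactor {A : Type*} [CommRing A] {a b : A} (h : b ∣ a) :
    (A ⧸ Ideal.span {a}) →+* A ⧸ Ideal.span {b} :=
  Ideal.Quotient.lift _ (Ideal.Quotient.mk _) fun x hx => by
    rw [Ideal.Quotient.eq_zero_iff_mem]
    exact Ideal.span_singleton_le_span_singleton.mpr h hx

/-- The inverse limit `lim_n A/a^n A`, as a subring of the product. -/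
def towerRing {A : Type*} [CommRing A] (a : A) : Subring (∀ n, A ⧸ Ideal.span {a ^ n}) where
  carrier := {f | ∀ n, qfactor (pow_dvd_pow a (Nat.le_succ n)) (f (n + 1)) = f n}
  mul_mem' := by
    intro f g hf hg n
    simp only [Pi.mul_apply, map_mul, hf n, hg n]
  one_mem' := by
    intro n
    simp
  add_mem' := by
    intro f g hf hg n
    simp only [Pi.add_apply, map_add, hf n, hg n]
  zero_mem' := by
    intro n
    simp
  neg_mem' := by
    intro f hf n
    simp only [Pi.neg_apply, map_neg, hf n]

section WittAux

variable {p : ℕ} [Fact p.Prime] {R : Type*} [CommRing R] [CharP R p]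

open WittVector

lemma vsch_inj : Function.Injective (verschiebung : WittVector p R → WittVector p R) := by
  intro x y h
  ext n
  have := congrArg (fun z : WittVector p R => z.coeff (n + 1)) h
  simpa [verschiebung_coeff_succ] using this

lemma exists_eq_vsch (x : WittVector p R) (hx : x.coeff 0 = 0) :
    ∃ y : WittVector p R, x = verschiebung y := by
  refine ⟨x.shift 1, ?_⟩
  have := eq_iterate_verschiebung (x := x) (n := 1) (by intro i hi; interval_cases i; exact hx)
  simpa using this

lemma exists_eq_mul_p [PerfectRing R p] (x : WittVector p R) (hx : x.coeff 0 = 0) :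
    ∃ y : WittVector p R, x = y * p := by
  obtain ⟨y, hy⟩ := exists_eq_vsch x hx
  refine ⟨(frobeniusEquiv p R).symm y, ?_⟩
  rw [hy, ← verschiebung_frobenius]
  congr 1
  exact ((frobeniusEquiv p R).apply_symm_apply y).symm

lemma p_cancel [PerfectRing R p] (x : WittVector p R) (hx : x * (p : WittVector p R) = 0) :
    x = 0 := by
  rw [← verschiebung_frobenius] at hx
  have h2 : WittVector.frobenius x = 0 := by
    apply vsch_inj; simpa using hx
  have hb := (frobenius_bijective p R).1
  apply hb
  simpa using h2

/-- coefficients below `n` of a multiple of `p^n` vanish. -/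
lemma mul_p_pow_coeff [PerfectRing R p] (n : ℕ) (y : WittVector p R) :
    ∀ i < n, (y * (p : WittVector p R) ^ n).coeff i = 0 := by
  induction n generalizing y with
  | zero => intro i hi; omega
  | succ n ih =>
    intro i hi
    have : y * (p : WittVector p R) ^ (n + 1) = (y * (p : WittVector p R) ^ n) * p := by ring
    rw [this]
    match i with
    | 0 => exact mul_charP_coeff_zero _
    | (j + 1) =>
      rw [mul_charP_coeff_succ, ih y j (by omega)]
      exact zero_pow (Fact.out : p.Prime).ne_zero

lemma exists_eq_mul_p_pow [PerfectRing R p] (n : ℕ) (x : WittVector p R)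
    (hx : ∀ i < n, x.coeff i = 0) : ∃ y : WittVector p R, x = y * (p : WittVector p R) ^ n := by
  induction n generalizing x with
  | zero => exact ⟨x, by simp⟩
  | succ n ih =>
    obtain ⟨w, hw⟩ := exists_eq_mul_p x (hx 0 (by omega))
    have hw' : ∀ i < n, w.coeff i = 0 := by
      intro i hi
      have h1 : x.coeff (i + 1) = w.coeff i ^ p := by rw [hw, mul_charP_coeff_succ]
      have h2 : w.coeff i ^ p = 0 := by rw [← h1]; exact hx (i + 1) (by omega)
      have hb := (bijective_frobenius R p).1
      apply hb
      simp only [frobenius_def, h2, map_zero]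
    obtain ⟨y, hy⟩ := ih w hw'
    exact ⟨y, by rw [hw, hy]; ring⟩

lemma wv_separated [PerfectRing R p] (x : WittVector p R)
    (h : ∀ n, ∃ w, x = w * (p : WittVector p R) ^ n) : x = 0 := by
  ext i
  obtain ⟨w, hw⟩ := h (i + 1)
  rw [hw, mul_p_pow_coeff (i + 1) w i (by omega), WittVector.zero_coeff]

/-- coefficients below `n` are unchanged by adding a multiple of `p^n`. -/
lemma add_mul_p_pow_coeff [PerfectRing R p] (n : ℕ) (a w : WittVector p R) (i : ℕ) (hi : i < n) :
    (a + w * (p : WittVector p R) ^ n).coeff i = a.coeff i := by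
  have h1 : WittVector.truncate n (a + w * (p : WittVector p R) ^ n) =
      WittVector.truncate n a := by
    rw [map_add]
    have : WittVector.truncate (p := p) n (w * (p : WittVector p R) ^ n) = 0 := by
      rw [← RingHom.mem_ker, WittVector.mem_ker_truncate]
      exact mul_p_pow_coeff n w
    rw [this, add_zero]
  have e1 := WittVector.coeff_truncate (p := p)
    (a + w * (p : WittVector p R) ^ n) (⟨i, hi⟩ : Fin n)
  have e2 := WittVector.coeff_truncate (p := p) a (⟨i, hi⟩ : Fin n)
  rw [← e1, ← e2, h1]

/-- limits of `p`-adically Cauchy sequences of Witt vectors. -/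
lemma wv_limit [PerfectRing R p] (z : ℕ → WittVector p R)
    (h : ∀ n, ∃ w, z (n + 1) = z n + w * (p : WittVector p R) ^ n) :
    ∃ L, ∀ n, ∃ w, L = z n + w * (p : WittVector p R) ^ n := by
  have stab : ∀ n m : ℕ, n ≤ m → ∀ i < n, (z m).coeff i = (z n).coeff i := by
    intro n m hnm
    induction m with
    | zero => intro i hi; omega
    | succ m ih =>
      rcases Nat.lt_or_ge n (m + 1) with hlt | hge
      · intro i hi
        obtain ⟨w, hw⟩ := h m
        rw [hw, add_mul_p_pow_coeff m _ _ i (by omega)]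
        exact ih (by omega) i hi
      · have : n = m + 1 := by omega
        subst this; intro i _; rfl
  refine ⟨WittVector.mk p (fun i => (z (i + 1)).coeff i), ?_⟩
  intro n
  have hc : ∀ i < n, (WittVector.mk p (fun i => (z (i + 1)).coeff i) - z n).coeff i = 0 := by
    intro i hi
    have h1 : WittVector.truncate (p := p) n (WittVector.mk p (fun i => (z (i + 1)).coeff i)) =
        WittVector.truncate n (z n) := by
      apply TruncatedWittVector.ext
      intro j
      rw [WittVector.coeff_truncate, WittVector.coeff_truncate, WittVector.coeff_mk]
      exact (stab (j + 1) n (by omega) j (by omega)).symm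
    have h2 : WittVector.truncate (p := p) n
        (WittVector.mk p (fun i => (z (i + 1)).coeff i) - z n) = 0 := by
      rw [map_sub, h1, sub_self]
    have hmem : (WittVector.mk p (fun i => (z (i + 1)).coeff i) - z n) ∈
        RingHom.ker (WittVector.truncate (p := p) (R := R) n) := by
      rw [RingHom.mem_ker]; exact h2
    exact (WittVector.mem_ker_truncate _ _).1 hmem i hi
  obtain ⟨w, hw⟩ := exists_eq_mul_p_pow n _ (fun i hi => hc i hi)
  exact ⟨w, by rw [← hw]; ring⟩

end WittAux
section Stage2

open WittVector

lemma qfactor_mk {A : Type*} [CommRing A] {a b : A} (h : b ∣ a) (x : A) :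
    qfactor h (Ideal.Quotient.mk _ x) = Ideal.Quotient.mk _ x :=
  Ideal.Quotient.lift_mk _ _ _

lemma sub_pow_zero {A : Type*} [CommRing A] (a : A) :
    Subsingleton (A ⧸ Ideal.span {a ^ 0}) := by
  constructor
  intro x y
  obtain ⟨x, rfl⟩ := Ideal.Quotient.mk_surjective x
  obtain ⟨y, rfl⟩ := Ideal.Quotient.mk_surjective y
  rw [Ideal.Quotient.eq, pow_zero]
  exact Ideal.mem_span_singleton.2 ⟨x - y, (one_mul _).symm⟩

lemma pow_reg {R : Type*} [CommRing R] {a : R} (ha : ∀ y, a * y = 0 → y = 0) :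
    ∀ m y, a ^ m * y = 0 → y = 0 := by
  intro m
  induction m with
  | zero => intro y hy; simpa using hy
  | succ m ih =>
    intro y hy
    refine ih y (ha _ ?_)
    rw [← mul_assoc, mul_comm a, ← pow_succ]
    exact hy

/-- The core induction for injectivity of multiplication by `[ϖ] - p`. -/
lemma teich_reg {p : ℕ} [Fact p.Prime] {R : Type*} [CommRing R] [CharP R p] [PerfectRing R p] :
    ∀ (i : ℕ) (a : R), (∀ y, a * y = 0 → y = 0) →
      ∀ w : WittVector p R, teichmuller p a * w = w * p → w.coeff i = 0 := by
  intro i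
  induction i with
  | zero =>
    intro a ha w hw
    have h0 := congrArg WittVector.constantCoeff hw
    simp only [map_mul, constantCoeff_apply, teichmuller_coeff_zero] at h0
    rw [coeff_p_zero, mul_zero] at h0
    exact ha _ h0
  | succ i ih =>
    intro a ha w hw
    have h0 : w.coeff 0 = 0 := by
      have h0 := congrArg WittVector.constantCoeff hw
      simp only [map_mul, constantCoeff_apply, teichmuller_coeff_zero] at h0
      rw [coeff_p_zero, mul_zero] at h0
      exact ha _ h0
    obtain ⟨w', rfl⟩ := exists_eq_vsch w h0
    have hFa : WittVector.frobenius (teichmuller p a) = teichmuller p (a ^ p) := by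
      rw [frobenius_eq_map_frobenius, map_teichmuller]
      simp [frobenius_def]
    have l1 : verschiebung w' * teichmuller p a = verschiebung (w' * teichmuller p (a ^ p)) := by
      rw [← hFa, verschiebung_mul_frobenius]
    have l2 : verschiebung w' * (p : WittVector p R) = verschiebung (w' * (p : WittVector p R)) := by
      rw [← verschiebung_frobenius (verschiebung w'), frobenius_verschiebung]
    have key : w' * teichmuller p (a ^ p) = w' * (p : WittVector p R) := by
      apply vsch_inj
      rw [← l1, ← l2, ← hw, mul_comm]
    have hw' : teichmuller p (a ^ p) * w' = w' * p := by rw [mul_comm, key]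
    rw [verschiebung_coeff_succ]
    exact ih (a ^ p) (pow_reg ha p) w' hw'

end Stage2
section Stage3

open WittVector

variable {p : ℕ} [Fact p.Prime] {A : Type*} [CommRing A]

local notation "K" => A ⧸ Ideal.span {(p : A)}
local notation "mkp" => Ideal.Quotient.mk (Ideal.span {(p : A)})

lemma pseq_pow {pseq : ℕ → A} (hpseq0 : pseq 0 = p) (hpseqS : ∀ n, pseq (n + 1) ^ p = pseq n)
    (n : ℕ) : pseq n ^ p ^ n = (p : A) := by
  induction n with
  | zero => simpa using hpseq0
  | succ n ih => rw [pow_succ', pow_mul, hpseqS, ih]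

lemma p_pow_reg (hp_nzd : (p : A) ∈ nonZeroDivisors A) (n : ℕ) {a b : A}
    (h : (p : A) ^ n * a = (p : A) ^ n * b) : a = b := by
  have hmem : (p : A) ^ n ∈ nonZeroDivisors A := pow_mem hp_nzd n
  exact mul_cancel_left_mem_nonZeroDivisors hmem |>.1 h

lemma pseq_reg (hp_nzd : (p : A) ∈ nonZeroDivisors A) {pseq : ℕ → A} (hpseq0 : pseq 0 = p)
    (hpseqS : ∀ n, pseq (n + 1) ^ p = pseq n) (n : ℕ) {a b : A}
    (h : pseq n * a = pseq n * b) : a = b := by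
  have h2 : (p : A) ^ 1 * a = (p : A) ^ 1 * b := by
    rw [pow_one, ← pseq_pow hpseq0 hpseqS n]
    have hpn : p ^ n ≠ 0 := pow_ne_zero _ (Fact.out : p.Prime).ne_zero
    calc pseq n ^ p ^ n * a = pseq n ^ (p ^ n - 1) * (pseq n * a) := by
          rw [← mul_assoc, ← pow_succ]
          congr 2
          omega
      _ = pseq n ^ (p ^ n - 1) * (pseq n * b) := by rw [h]
      _ = pseq n ^ p ^ n * b := by
          rw [← mul_assoc, ← pow_succ]
          congr 2
          omega
  exact p_pow_reg hp_nzd 1 h2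

variable [CharP (A ⧸ Ideal.span {(p : A)}) p]

lemma coeffpow (y : Perfection K p) (n k : ℕ) :
    Perfection.coeff K p n y = Perfection.coeff K p (n + k) y ^ p ^ k := by
  induction k with
  | zero => simp
  | succ k ih =>
    rw [ih, ← Perfection.coeff_pow_p' (n := n + k) y, ← pow_mul, ← pow_succ']
    rfl

lemma mk_pseq_pow_p_pow {pseq : ℕ → A} (hpseq0 : pseq 0 = p)
    (hpseqS : ∀ n, pseq (n + 1) ^ p = pseq n) (n : ℕ) :
    (mkp (pseq n)) ^ p ^ n = 0 := by
  rw [← map_pow, pseq_pow hpseq0 hpseqS n, Ideal.Quotient.eq_zero_iff_mem]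
  exact Ideal.mem_span_singleton_self _

lemma ϖ_reg (hp_nzd : (p : A) ∈ nonZeroDivisors A) {pseq : ℕ → A} (hpseq0 : pseq 0 = p)
    (hpseqS : ∀ n, pseq (n + 1) ^ p = pseq n) {ϖ : Perfection K p}
    (hϖ : ∀ n, Perfection.coeff K p n ϖ = mkp (pseq n)) :
    ∀ y : Perfection K p, ϖ * y = 0 → y = 0 := by
  intro y hy
  -- each coefficient of y is a multiple of a huge power of `pseq`
  have key : ∀ m, ∃ d : A, Perfection.coeff K p m y = mkp (pseq m) ^ (p ^ m - 1) * mkp d := by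
    intro m
    obtain ⟨c, hc⟩ := Ideal.Quotient.mk_surjective (Perfection.coeff K p m y)
    have h1 : mkp (pseq m * c) = 0 := by
      rw [map_mul, hc, ← hϖ m, ← map_mul, hy, map_zero]
    rw [Ideal.Quotient.eq_zero_iff_mem, Ideal.mem_span_singleton] at h1
    obtain ⟨d, hd⟩ := h1
    have hd2 : pseq m * c = pseq m * (pseq m ^ (p ^ m - 1) * d) := by
      rw [hd, ← mul_assoc, ← pow_succ']
      have : p ^ m - 1 + 1 = p ^ m := by
        have : p ^ m ≠ 0 := pow_ne_zero _ (Fact.out : p.Prime).ne_zero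
        omega
      rw [this, pseq_pow hpseq0 hpseqS]
    have := pseq_reg hp_nzd hpseq0 hpseqS m hd2
    exact ⟨d, by rw [← hc, this, map_mul, map_pow]⟩
  ext n
  rw [map_zero, coeffpow y n 1]
  obtain ⟨d, hd⟩ := key (n + 1)
  rw [hd, mul_pow, ← pow_mul]
  have hbig : p ^ (n + 1) ≤ (p ^ (n + 1) - 1) * p := by
    have h2 : 2 ≤ p := (Fact.out : p.Prime).two_le
    have h3 : p ^ (n + 1) * 2 ≤ p ^ (n + 1) * p := Nat.mul_le_mul_left _ h2
    have h4 : p ≤ p ^ (n + 1) := Nat.le_self_pow (by omega) p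
    have h5 : (p ^ (n + 1) - 1) * p = p ^ (n + 1) * p - p := by rw [Nat.sub_mul, one_mul]
    omega
  obtain ⟨k, hk⟩ := Nat.exists_eq_add_of_le hbig
  rw [pow_one, hk, pow_add, mk_pseq_pow_p_pow hpseq0 hpseqS, zero_mul, zero_mul]

end Stage3
section Stage4

open WittVector

variable {p : ℕ} [Fact p.Prime] {A : Type*} [CommRing A]
  [CharP (A ⧸ Ideal.span {(p : A)}) p]

local notation "K" => A ⧸ Ideal.span {(p : A)}
local notation "mkp" => Ideal.Quotient.mk (Ideal.span {(p : A)})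
local notation "P" => Perfection (A ⧸ Ideal.span {(p : A)}) p

variable {Θ : ∀ n : ℕ, TruncatedWittVector p n (A ⧸ Ideal.span {(p : A)}) →+*
      A ⧸ Ideal.span {(p : A) ^ n}}
  (hΘ : ∀ n : ℕ, ∀ _hn : 1 ≤ n, ∀ w : WittVector p (A ⧸ Ideal.span {(p : A) ^ n}),
      Θ n (WittVector.truncate n
          (WittVector.map (qfactor (dvd_pow_self (p : A) (Nat.one_le_iff_ne_zero.mp _hn))) w)) =
        ∑ i : Fin n, (p : A ⧸ Ideal.span {(p : A) ^ n}) ^ (i : ℕ) *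
          (WittVector.truncate n w).coeff i ^ p ^ (n - (i : ℕ)))

lemma mkp_p_eq_zero : (Ideal.Quotient.mk (Ideal.span {(p : A)})) ((p : A)) = 0 := by
  rw [Ideal.Quotient.eq_zero_iff_mem]
  exact Ideal.mem_span_singleton_self _

include hΘ

lemma theta_key (n : ℕ) (hn : 1 ≤ n) (x : WittVector p P) (b : ℕ → A)
    (hb : ∀ i, i < n → mkp (b i) = Perfection.coeff K p n (x.coeff i)) :
    Θ n (WittVector.truncate n (WittVector.map (Perfection.coeff K p n) x)) =
      Ideal.Quotient.mk (Ideal.span {(p : A) ^ n})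
        (∑ i ∈ Finset.range n, (p : A) ^ i * b i ^ p ^ (n - i)) := by
  set w : WittVector p (A ⧸ Ideal.span {(p : A) ^ n}) :=
    WittVector.mk p (fun i => Ideal.Quotient.mk _ (b i)) with hw
  have H := hΘ n hn w
  have hshow : WittVector.truncate n
      (WittVector.map (qfactor (dvd_pow_self (p : A) (Nat.one_le_iff_ne_zero.mp hn))) w) =
      WittVector.truncate n (WittVector.map (Perfection.coeff K p n) x) := by
    apply TruncatedWittVector.ext
    intro i
    rw [WittVector.coeff_truncate, WittVector.coeff_truncate, WittVector.map_coeff,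
      WittVector.map_coeff, hw]
    show qfactor _ (Ideal.Quotient.mk _ (b i)) = _
    rw [qfactor_mk, hb i i.2]
  rw [hshow] at H
  rw [H, map_sum, Finset.sum_range]
  apply Finset.sum_congr rfl
  intro i _
  rw [WittVector.coeff_truncate, hw]
  show (p : A ⧸ Ideal.span {(p : A) ^ n}) ^ (i : ℕ) *
      (Ideal.Quotient.mk _ (b i)) ^ p ^ (n - (i : ℕ)) = _
  rw [map_mul, map_pow, map_pow, map_natCast]

lemma theta_compat (x : WittVector p P) (n : ℕ) :
    qfactor (pow_dvd_pow (p : A) (Nat.le_succ n))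
        (Θ (n + 1) (WittVector.truncate (n + 1)
          (WittVector.map (Perfection.coeff K p (n + 1)) x))) =
      Θ n (WittVector.truncate n (WittVector.map (Perfection.coeff K p n) x)) := by
  rcases Nat.eq_zero_or_pos n with rfl | hn
  · have := sub_pow_zero (p : A)
    exact Subsingleton.elim _ _
  set b : ℕ → A := fun i =>
    Function.surjInv Ideal.Quotient.mk_surjective (Perfection.coeff K p (n + 1) (x.coeff i))
    with hbdef
  have hb : ∀ i, i < n + 1 → mkp (b i) = Perfection.coeff K p (n + 1) (x.coeff i) := fun i _ =>
    Function.surjInv_eq Ideal.Quotient.mk_surjective _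
  have hb' : ∀ i, i < n → mkp (b i ^ p) = Perfection.coeff K p n (x.coeff i) := by
    intro i hi
    rw [map_pow, hb i (by omega), Perfection.coeff_pow_p']
  rw [theta_key hΘ (n + 1) (by omega) x b hb, theta_key hΘ n hn x (fun i => b i ^ p) hb',
    qfactor_mk, Ideal.Quotient.eq]
  rw [Finset.sum_range_succ]
  have hterm : ∀ i ∈ Finset.range n,
      (p : A) ^ i * b i ^ p ^ (n + 1 - i) = (p : A) ^ i * (b i ^ p) ^ p ^ (n - i) := by
    intro i hi
    rw [Finset.mem_range] at hi
    rw [← pow_mul, ← pow_succ']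
    have he : n + 1 - i = n - i + 1 := by omega
    rw [he]
  rw [Finset.sum_congr rfl hterm]
  simp only [add_sub_cancel_left]
  rw [Ideal.mem_span_singleton]
  exact ⟨b n ^ p ^ (n + 1 - n), by ring⟩



lemma theta_teich (n : ℕ) (hn : 1 ≤ n) (b : P) (ℓ : A)
    (hℓ : mkp ℓ = Perfection.coeff K p n b) :
    Θ n (WittVector.truncate n (WittVector.map (Perfection.coeff K p n) (teichmuller p b))) =
      Ideal.Quotient.mk (Ideal.span {(p : A) ^ n}) (ℓ ^ p ^ n) := by
  have hb : ∀ i, i < n → mkp (if i = 0 then ℓ else 0) =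
      Perfection.coeff K p n ((teichmuller p b).coeff i) := by
    intro i hi
    rcases Nat.eq_zero_or_pos i with rfl | hipos
    · rw [teichmuller_coeff_zero]
      simpa using hℓ
    · rw [teichmuller_coeff_pos p b i hipos, if_neg (by omega), map_zero, map_zero]
  rw [theta_key hΘ n hn _ _ hb]
  congr 1
  rw [Finset.sum_eq_single_of_mem 0 (Finset.mem_range.2 (by omega))]
  · simp
  · intro i _ hi
    rw [if_neg hi, zero_pow (pow_ne_zero _ (Fact.out : p.Prime).ne_zero), mul_zero]

lemma theta_xi_zero {pseq : ℕ → A} (hpseq0 : pseq 0 = p)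
    (hpseqS : ∀ n, pseq (n + 1) ^ p = pseq n) {ϖ : P}
    (hϖ : ∀ n, Perfection.coeff K p n ϖ = mkp (pseq n)) (n : ℕ) (hn : 1 ≤ n) :
    Θ n (WittVector.truncate n (WittVector.map (Perfection.coeff K p n)
      (teichmuller p ϖ - (p : WittVector p P)))) = 0 := by
  rw [map_sub, map_sub, map_sub, theta_teich hΘ n hn ϖ (pseq n) (hϖ n).symm,
    pseq_pow hpseq0 hpseqS n]
  rw [map_natCast, map_natCast, map_natCast, map_natCast, sub_eq_zero]

lemma theta_mod_p (n : ℕ) (hn : 1 ≤ n) (hd : (p : A) ∣ (p : A) ^ n) (x : WittVector p P) :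
    qfactor hd (Θ n (WittVector.truncate n (WittVector.map (Perfection.coeff K p n) x))) =
      Perfection.coeff K p 0 (x.coeff 0) := by
  set b : ℕ → A := fun i =>
    Function.surjInv Ideal.Quotient.mk_surjective (Perfection.coeff K p n (x.coeff i)) with hbdef
  have hb : ∀ i, i < n → mkp (b i) = Perfection.coeff K p n (x.coeff i) := fun i _ =>
    Function.surjInv_eq Ideal.Quotient.mk_surjective _
  rw [theta_key hΘ n hn x b hb, qfactor_mk, map_sum]
  rw [Finset.sum_eq_single_of_mem 0 (Finset.mem_range.2 (by omega))]
  · rw [pow_zero, one_mul, map_pow, hb 0 (by omega)]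
    rw [coeffpow (x.coeff 0) 0 n, zero_add, Nat.sub_zero]
  · intro i _ hi
    rw [map_mul, map_pow, mkp_p_eq_zero, zero_pow hi, zero_mul]

end Stage4
section Stage6

open WittVector

variable {p : ℕ} [Fact p.Prime] {A : Type*} [CommRing A]
  [CharP (A ⧸ Ideal.span {(p : A)}) p]

local notation "K" => A ⧸ Ideal.span {(p : A)}
local notation "mkp" => Ideal.Quotient.mk (Ideal.span {(p : A)})
local notation "P" => Perfection (A ⧸ Ideal.span {(p : A)}) p

/-- If `c` is divisible by `p` after raising to the `pⁿ`-th power, then `c` is divisible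
by `pseq n`, by integral closedness. -/
lemma div_pseq (hp_nzd : (p : A) ∈ nonZeroDivisors A)
    (hintcl : ∀ x : Localization.Away (p : A), IsIntegral A x →
      ∃ a : A, algebraMap A (Localization.Away (p : A)) a = x)
    {pseq : ℕ → A} (hpseq0 : pseq 0 = p) (hpseqS : ∀ n, pseq (n + 1) ^ p = pseq n)
    (n : ℕ) (c : A) (hc : ∃ a, c ^ p ^ n = (p : A) * a) : ∃ e, c = pseq n * e := by
  obtain ⟨a, ha⟩ := hc
  set L := Localization.Away (p : A)
  have hle : Submonoid.powers (p : A) ≤ nonZeroDivisors A := Submonoid.powers_le.2 hp_nzd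
  have hinj : Function.Injective (algebraMap A L) := IsLocalization.injective L hle
  have hpu : IsUnit (algebraMap A L (p : A)) := IsLocalization.Away.algebraMap_isUnit (p : A)
  have hdvd : pseq n ∣ (p : A) := by
    refine ⟨pseq n ^ (p ^ n - 1), ?_⟩
    rw [← pow_succ']
    have hne : p ^ n ≠ 0 := pow_ne_zero _ (Fact.out : p.Prime).ne_zero
    have : p ^ n - 1 + 1 = p ^ n := by omega
    rw [this, pseq_pow hpseq0 hpseqS]
  have hu : IsUnit (algebraMap A L (pseq n)) :=
    isUnit_of_dvd_unit (map_dvd _ hdvd) hpu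
  set u := hu.unit
  set x : L := algebraMap A L c * (↑u⁻¹ : Lˣ) with hx
  have hupow : (u : L) ^ p ^ n = algebraMap A L (p : A) := by
    have : (u : L) = algebraMap A L (pseq n) := rfl
    rw [this, ← map_pow, pseq_pow hpseq0 hpseqS]
  have h1 : x * (u : L) = algebraMap A L c := by
    rw [hx, mul_assoc]
    simp
  have hxpow : x ^ p ^ n = algebraMap A L a := by
    have h2 : x ^ p ^ n * (u : L) ^ p ^ n = (u : L) ^ p ^ n * algebraMap A L a := by
      rw [← mul_pow, h1, ← map_pow, ha, map_mul, ← hupow]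
    have h3 : (u : L) ^ p ^ n * x ^ p ^ n = (u : L) ^ p ^ n * algebraMap A L a := by
      rw [mul_comm ((u : L) ^ p ^ n) (x ^ p ^ n)]
      exact h2
    exact (u.isUnit.pow _).mul_left_cancel h3
  have hint : IsIntegral A x := by
    refine ⟨Polynomial.X ^ p ^ n - Polynomial.C a,
      Polynomial.monic_X_pow_sub_C a (pow_ne_zero _ (Fact.out : p.Prime).ne_zero), ?_⟩
    simp [Polynomial.eval₂_sub, hxpow]
  obtain ⟨e, he⟩ := hintcl x hint
  refine ⟨e, hinj ?_⟩
  rw [map_mul, he]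
  rw [← h1, mul_comm x (u : L)]
  congr 1

lemma tilt_ker (hp_nzd : (p : A) ∈ nonZeroDivisors A)
    (hintcl : ∀ x : Localization.Away (p : A), IsIntegral A x →
      ∃ a : A, algebraMap A (Localization.Away (p : A)) a = x)
    {pseq : ℕ → A} (hpseq0 : pseq 0 = p) (hpseqS : ∀ n, pseq (n + 1) ^ p = pseq n)
    {ϖ : P} (hϖ : ∀ n, Perfection.coeff K p n ϖ = mkp (pseq n)) :
    ∀ y : P, Perfection.coeff K p 0 y = 0 → ∃ t, y = ϖ * t := by
  intro y hy0
  set c : ℕ → A := fun n =>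
    Function.surjInv Ideal.Quotient.mk_surjective (Perfection.coeff K p n y) with hcdef
  have hc : ∀ n, mkp (c n) = Perfection.coeff K p n y := fun n =>
    Function.surjInv_eq Ideal.Quotient.mk_surjective _
  have hcp : ∀ n, ∃ a, c n ^ p ^ n = (p : A) * a := by
    intro n
    have h1 : mkp (c n ^ p ^ n) = 0 := by
      have h0 := coeffpow y 0 n
      rw [zero_add] at h0
      rw [map_pow, hc n, ← h0, hy0]
    rw [Ideal.Quotient.eq_zero_iff_mem, Ideal.mem_span_singleton] at h1
    exact h1
  have he : ∀ n, ∃ e, c n = pseq n * e := fun n =>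
    div_pseq hp_nzd hintcl hpseq0 hpseqS n (c n) (hcp n)
  choose e he using he
  -- the key congruence in K
  have hE : ∀ m k, 1 ≤ m → 1 ≤ k → mkp (e (m + 1)) ^ p ^ (k + 1) = mkp (e m) ^ p ^ k := by
    intro m k hm hk
    -- step 1 : exact identity in A
    have step1 : ∃ g, e (m + 1) ^ p - e m = pseq m ^ (p ^ m - 1) * g := by
      have h1 : pseq m * (e (m + 1) ^ p) = c (m + 1) ^ p := by
        rw [← hpseqS m, ← mul_pow, ← he (m + 1)]
      have h2 : mkp (c (m + 1) ^ p - c m) = 0 := by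
        rw [map_sub, map_pow, hc, hc, Perfection.coeff_pow_p', sub_self]
      rw [Ideal.Quotient.eq_zero_iff_mem, Ideal.mem_span_singleton] at h2
      obtain ⟨g, hg⟩ := h2
      refine ⟨g, pseq_reg hp_nzd hpseq0 hpseqS m ?_⟩
      have hne : p ^ m ≠ 0 := pow_ne_zero _ (Fact.out : p.Prime).ne_zero
      have h3 : p ^ m - 1 + 1 = p ^ m := by omega
      rw [mul_sub, h1, ← he m, ← mul_assoc, ← pow_succ', h3, pseq_pow hpseq0 hpseqS]
      exact hg
    obtain ⟨g, hg⟩ := step1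
    have hKrel : mkp (e (m + 1)) ^ p = mkp (e m) + mkp (pseq m) ^ (p ^ m - 1) * mkp g := by
      have := congrArg mkp hg
      rw [map_sub, map_pow, map_mul, map_pow] at this
      linear_combination this
    have hzero : (mkp (pseq m) ^ (p ^ m - 1) * mkp g) ^ p ^ k = 0 := by
      rw [mul_pow, ← pow_mul]
      have hbig : p ^ m ≤ (p ^ m - 1) * p ^ k := by
        have h2 : 2 ≤ p := (Fact.out : p.Prime).two_le
        have h3 : p ≤ p ^ k := Nat.le_self_pow (by omega) p
        have h4 : p ^ m * 2 ≤ p ^ m * p := Nat.mul_le_mul_left _ h2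
        have h5 : p ≤ p ^ m := Nat.le_self_pow (by omega) p
        have h6 : (p ^ m - 1) * p ≤ (p ^ m - 1) * p ^ k :=
          Nat.mul_le_mul_left _ h3
        have h7 : (p ^ m - 1) * p = p ^ m * p - p := by rw [Nat.sub_mul, one_mul]
        have h8 : 1 ≤ p ^ m := by omega
        omega
      obtain ⟨j, hj⟩ := Nat.exists_eq_add_of_le hbig
      rw [hj, pow_add, mk_pseq_pow_p_pow hpseq0 hpseqS, zero_mul, zero_mul]
    calc mkp (e (m + 1)) ^ p ^ (k + 1) = (mkp (e (m + 1)) ^ p) ^ p ^ k := by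
          rw [← pow_mul, ← pow_succ']
      _ = (mkp (e m) + mkp (pseq m) ^ (p ^ m - 1) * mkp g) ^ p ^ k := by rw [hKrel]
      _ = mkp (e m) ^ p ^ k + (mkp (pseq m) ^ (p ^ m - 1) * mkp g) ^ p ^ k := by
          rw [add_pow_char_pow]
      _ = mkp (e m) ^ p ^ k := by rw [hzero, add_zero]
  -- build t ∈ P
  set t : P := ⟨fun n => mkp (e (n + 2)) ^ p ^ 2, by
    intro n
    show (mkp (e (n + 3)) ^ p ^ 2) ^ p = mkp (e (n + 2)) ^ p ^ 2
    rw [← pow_mul]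
    have : p ^ 2 * p = p ^ 3 := by ring
    rw [this]
    exact hE (n + 2) 2 (by omega) (by omega)⟩ with ht
  refine ⟨t, ?_⟩
  ext n
  rw [map_mul, hϖ n, ht]
  show Perfection.coeff K p n y = mkp (pseq n) * (mkp (e (n + 2)) ^ p ^ 2)
  have hps : pseq (n + 2) ^ p ^ 2 = pseq n := by
    have : (pseq (n + 2) ^ p) ^ p = pseq n := by rw [hpseqS, hpseqS]
    rw [← this, ← pow_mul, pow_two]
  calc Perfection.coeff K p n y = Perfection.coeff K p (n + 2) y ^ p ^ 2 := coeffpow y n 2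
    _ = mkp (c (n + 2)) ^ p ^ 2 := by rw [hc]
    _ = mkp ((pseq (n + 2) * e (n + 2)) ^ p ^ 2) := by rw [← he, map_pow]
    _ = mkp (pseq n) * mkp (e (n + 2)) ^ p ^ 2 := by
        rw [mul_pow, map_mul, map_pow, map_pow, ← map_pow, hps]

end Stage6
section Stage7

open WittVector

variable {p : ℕ} [Fact p.Prime] {A : Type*} [CommRing A]
  [CharP (A ⧸ Ideal.span {(p : A)}) p]

local notation "K" => A ⧸ Ideal.span {(p : A)}
local notation "mkp" => Ideal.Quotient.mk (Ideal.span {(p : A)})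
local notation "P" => Perfection (A ⧸ Ideal.span {(p : A)}) p

variable {Θ : ∀ n : ℕ, TruncatedWittVector p n (A ⧸ Ideal.span {(p : A)}) →+*
      A ⧸ Ideal.span {(p : A) ^ n}}

/-- Fontaine's map θ. -/
noncomputable def thetaHom (Θ : ∀ n : ℕ, TruncatedWittVector p n (A ⧸ Ideal.span {(p : A)}) →+*
      A ⧸ Ideal.span {(p : A) ^ n})
    (hΘ : ∀ n : ℕ, ∀ _hn : 1 ≤ n, ∀ w : WittVector p (A ⧸ Ideal.span {(p : A) ^ n}),
      Θ n (WittVector.truncate n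
          (WittVector.map (qfactor (dvd_pow_self (p : A) (Nat.one_le_iff_ne_zero.mp _hn))) w)) =
        ∑ i : Fin n, (p : A ⧸ Ideal.span {(p : A) ^ n}) ^ (i : ℕ) *
          (WittVector.truncate n w).coeff i ^ p ^ (n - (i : ℕ))) :
    WittVector p P →+* ↥(towerRing (p : A)) :=
  RingHom.codRestrict
    (Pi.ringHom fun n => (Θ n).comp
      ((WittVector.truncate n).comp (WittVector.map (Perfection.coeff K p n))))
    (towerRing (p : A))
    (fun x n => theta_compat hΘ x n)

variable (hΘ : ∀ n : ℕ, ∀ _hn : 1 ≤ n, ∀ w : WittVector p (A ⧸ Ideal.span {(p : A) ^ n}),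
      Θ n (WittVector.truncate n
          (WittVector.map (qfactor (dvd_pow_self (p : A) (Nat.one_le_iff_ne_zero.mp _hn))) w)) =
        ∑ i : Fin n, (p : A ⧸ Ideal.span {(p : A) ^ n}) ^ (i : ℕ) *
          (WittVector.truncate n w).coeff i ^ p ^ (n - (i : ℕ)))

lemma thetaHom_prop : ∀ n, 1 ≤ n → ∀ x : WittVector p P,
    ((thetaHom Θ hΘ x : ∀ n, A ⧸ Ideal.span {(p : A) ^ n}) n) =
      Θ n (WittVector.truncate n (WittVector.map (Perfection.coeff K p n) x)) :=
  fun _ _ _ => rfl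

lemma theta_unique (θ₁ θ₂ : WittVector p P →+* ↥(towerRing (p : A)))
    (h1 : ∀ n, 1 ≤ n → ∀ x, (θ₁ x).1 n =
      Θ n (WittVector.truncate n (WittVector.map (Perfection.coeff K p n) x)))
    (h2 : ∀ n, 1 ≤ n → ∀ x, (θ₂ x).1 n =
      Θ n (WittVector.truncate n (WittVector.map (Perfection.coeff K p n) x))) :
    θ₁ = θ₂ := by
  refine RingHom.ext fun x => Subtype.ext (funext fun n => ?_)
  match n with
  | 0 =>
    have := sub_pow_zero (p : A)
    exact Subsingleton.elim _ _
  | (n + 1) => rw [h1 (n + 1) (by omega) x, h2 (n + 1) (by omega) x]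

/-- `ξ`-cancellation of `p`-powers. -/
lemma xi_cancel (hp_nzd : (p : A) ∈ nonZeroDivisors A) {pseq : ℕ → A}
    (hpseq0 : pseq 0 = p) (hpseqS : ∀ n, pseq (n + 1) ^ p = pseq n)
    {ϖ : P} (hϖ : ∀ n, Perfection.coeff K p n ϖ = mkp (pseq n)) :
    ∀ (n : ℕ) (z : WittVector p P),
      (∃ w, (teichmuller p ϖ - (p : WittVector p P)) * z = w * (p : WittVector p P) ^ n) →
      ∃ u, z = u * (p : WittVector p P) ^ n := by
  intro n
  induction n with
  | zero => intro z _; exact ⟨z, by simp⟩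
  | succ n ih =>
    intro z hz
    obtain ⟨w, hw⟩ := hz
    have hz0 : z.coeff 0 = 0 := by
      have h0 := congrArg WittVector.constantCoeff hw
      rw [map_mul, map_sub] at h0
      simp only [constantCoeff_apply] at h0
      rw [teichmuller_coeff_zero, coeff_p_zero, sub_zero,
        mul_p_pow_coeff (n + 1) w 0 (by omega)] at h0
      exact ϖ_reg hp_nzd hpseq0 hpseqS hϖ _ h0
    obtain ⟨z', hz'⟩ := exists_eq_mul_p z hz0
    have hmul : ((teichmuller p ϖ - (p : WittVector p P)) * z' -
        w * (p : WittVector p P) ^ n) * (p : WittVector p P) = 0 := by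
      rw [sub_mul, mul_assoc, ← hz']
      rw [hw]
      ring
    have hcanc : (teichmuller p ϖ - (p : WittVector p P)) * z' =
        w * (p : WittVector p P) ^ n := by
      have h := p_cancel _ hmul
      exact sub_eq_zero.mp h
    obtain ⟨u, hu⟩ := ih z' ⟨w, hcanc⟩
    exact ⟨u, by rw [hz', hu]; ring⟩

end Stage7
section Stage8

open WittVector

variable {p : ℕ} [Fact p.Prime] {A : Type*} [CommRing A]
  [CharP (A ⧸ Ideal.span {(p : A)}) p]

local notation "K" => A ⧸ Ideal.span {(p : A)}
local notation "mkp" => Ideal.Quotient.mk (Ideal.span {(p : A)})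
local notation "P" => Perfection (A ⧸ Ideal.span {(p : A)}) p

lemma xi_inj (hp_nzd : (p : A) ∈ nonZeroDivisors A) {pseq : ℕ → A}
    (hpseq0 : pseq 0 = p) (hpseqS : ∀ n, pseq (n + 1) ^ p = pseq n)
    {ϖ : P} (hϖ : ∀ n, Perfection.coeff K p n ϖ = mkp (pseq n)) :
    Function.Injective
      (fun w : WittVector p P => (teichmuller p ϖ - (p : WittVector p P)) * w) := by
  intro a b h
  dsimp only at h
  have h0 : (teichmuller p ϖ - (p : WittVector p P)) * (a - b) = 0 := by
    rw [mul_sub, h, sub_self]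
  have heq : teichmuller p ϖ * (a - b) = (a - b) * (p : WittVector p P) := by
    rw [sub_mul] at h0
    rw [sub_eq_zero] at h0
    rw [h0, mul_comm]
  have hz : a - b = 0 := WittVector.ext fun i => by
    rw [WittVector.zero_coeff]
    exact teich_reg i ϖ (ϖ_reg hp_nzd hpseq0 hpseqS hϖ) _ heq
  exact sub_eq_zero.mp hz

lemma coeff0_surj (hfrob : ∀ y : K, ∃ x, x ^ p = y) (t : K) :
    ∃ b : P, Perfection.coeff K p 0 b = t := by
  set r : ℕ → K := fun n => Nat.rec t (fun _ prev => Classical.choose (hfrob prev)) n with hr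
  have hrS : ∀ n, r (n + 1) ^ p = r n := fun n => Classical.choose_spec (hfrob (r n))
  exact ⟨⟨r, hrS⟩, rfl⟩

variable {Θ : ∀ n : ℕ, TruncatedWittVector p n (A ⧸ Ideal.span {(p : A)}) →+*
      A ⧸ Ideal.span {(p : A) ^ n}}
  (hΘ : ∀ n : ℕ, ∀ _hn : 1 ≤ n, ∀ w : WittVector p (A ⧸ Ideal.span {(p : A) ^ n}),
      Θ n (WittVector.truncate n
          (WittVector.map (qfactor (dvd_pow_self (p : A) (Nat.one_le_iff_ne_zero.mp _hn))) w)) =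
        ∑ i : Fin n, (p : A ⧸ Ideal.span {(p : A) ^ n}) ^ (i : ℕ) *
          (WittVector.truncate n w).coeff i ^ p ^ (n - (i : ℕ)))

include hΘ

/-- The key decomposition lemma for the kernel. -/
lemma Mprime (hp_nzd : (p : A) ∈ nonZeroDivisors A)
    (hintcl : ∀ x : Localization.Away (p : A), IsIntegral A x →
      ∃ a : A, algebraMap A (Localization.Away (p : A)) a = x)
    {pseq : ℕ → A} (hpseq0 : pseq 0 = p) (hpseqS : ∀ n, pseq (n + 1) ^ p = pseq n)
    {ϖ : P} (hϖ : ∀ n, Perfection.coeff K p n ϖ = mkp (pseq n)) :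
    ∀ (n : ℕ) (x : WittVector p P),
      (∀ m, 1 ≤ m → Θ m (WittVector.truncate m
        (WittVector.map (Perfection.coeff K p m) x)) = 0) →
      ∃ z w, x = (teichmuller p ϖ - (p : WittVector p P)) * z +
        w * (p : WittVector p P) ^ n := by
  intro n
  induction n with
  | zero => intro x _; exact ⟨0, x, by simp⟩
  | succ n ih =>
    intro x hx
    obtain ⟨z, w, hzw⟩ := ih x hx
    -- the `n+1` component of `w * p^n` vanishes after dividing by `p^n`
    have hTx := hx (n + 1) (by omega)
    have hTxi := theta_xi_zero hΘ hpseq0 hpseqS hϖ (n + 1) (by omega)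
    have hTsum : Θ (n + 1) (WittVector.truncate (n + 1)
        (WittVector.map (Perfection.coeff K p (n + 1)) (w * (p : WittVector p P) ^ n))) = 0 := by
      have hmap := congrArg (fun y => Θ (n + 1) (WittVector.truncate (n + 1)
        (WittVector.map (Perfection.coeff K p (n + 1)) y))) hzw
      simp only [map_add, map_mul] at hmap
      rw [hTxi, zero_mul, zero_add] at hmap
      rw [map_mul, map_mul, map_mul, ← hmap]
      exact hTx
    -- deduce the constant term of `w` dies in `K`
    have hc : Perfection.coeff K p 0 (w.coeff 0) = 0 := by
      have hmodp := theta_mod_p hΘ (n + 1) (by omega)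
        (dvd_pow_self (p : A) (by omega : n + 1 ≠ 0)) w
      set c := Θ (n + 1) (WittVector.truncate (n + 1)
        (WittVector.map (Perfection.coeff K p (n + 1)) w)) with hcdef
      -- T_{n+1}(w) * p^n = 0
      have hTw : c * (p : A ⧸ Ideal.span {(p : A) ^ (n + 1)}) ^ n = 0 := by
        calc c * (p : A ⧸ Ideal.span {(p : A) ^ (n + 1)}) ^ n
            = Θ (n + 1) (WittVector.truncate (n + 1)
              (WittVector.map (Perfection.coeff K p (n + 1))
                (w * (p : WittVector p P) ^ n))) := by
              rw [map_mul, map_mul, map_mul, map_pow, map_pow, map_pow,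
                map_natCast, map_natCast, map_natCast]
          _ = 0 := hTsum
      obtain ⟨c', hc'⟩ := Ideal.Quotient.mk_surjective c
      have hcc : Ideal.Quotient.mk (Ideal.span {(p : A) ^ (n + 1)}) (c' * (p : A) ^ n) = 0 := by
        rw [map_mul, hc', map_pow, map_natCast]
        exact hTw
      rw [Ideal.Quotient.eq_zero_iff_mem, Ideal.mem_span_singleton] at hcc
      obtain ⟨d, hd⟩ := hcc
      have hpd : c' = (p : A) * d := by
        apply p_pow_reg hp_nzd n
        calc (p : A) ^ n * c' = c' * (p : A) ^ n := by ring
          _ = (p : A) ^ (n + 1) * d := hd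
          _ = (p : A) ^ n * ((p : A) * d) := by ring
      have hq : qfactor (dvd_pow_self (p : A) (by omega : n + 1 ≠ 0)) c = 0 := by
        rw [← hc', qfactor_mk, hpd, map_mul, mkp_p_eq_zero, zero_mul]
      rw [← hmodp, hq]
    -- now apply the tilt kernel lemma and `n = 1` reasoning
    obtain ⟨t, ht⟩ := tilt_ker hp_nzd hintcl hpseq0 hpseqS hϖ (w.coeff 0) hc
    have h0 : (w - teichmuller p ϖ * teichmuller p t).coeff 0 = 0 := by
      have := congrArg WittVector.constantCoeff
        (rfl : w - teichmuller p ϖ * teichmuller p t = w - teichmuller p ϖ * teichmuller p t)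
      rw [show ((w - teichmuller p ϖ * teichmuller p t).coeff 0) =
        WittVector.constantCoeff (w - teichmuller p ϖ * teichmuller p t) from rfl]
      rw [map_sub, map_mul]
      simp only [constantCoeff_apply, teichmuller_coeff_zero]
      rw [ht, sub_self]
    obtain ⟨v, hv⟩ := exists_eq_mul_p _ h0
    refine ⟨z + teichmuller p t * (p : WittVector p P) ^ n,
      teichmuller p t + v, ?_⟩
    have hw : w = (teichmuller p ϖ - (p : WittVector p P)) * teichmuller p t +
        (teichmuller p t + v) * (p : WittVector p P) := by
      have : w = teichmuller p ϖ * teichmuller p t + v * (p : WittVector p P) := by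
        rw [← hv]; ring
      rw [this]; ring
    rw [hzw, hw]; ring

end Stage8
section Stage9

open WittVector

variable {p : ℕ} [Fact p.Prime] {A : Type*} [CommRing A]
  [CharP (A ⧸ Ideal.span {(p : A)}) p]

local notation "K" => A ⧸ Ideal.span {(p : A)}
local notation "mkp" => Ideal.Quotient.mk (Ideal.span {(p : A)})
local notation "P" => Perfection (A ⧸ Ideal.span {(p : A)}) p

variable {Θ : ∀ n : ℕ, TruncatedWittVector p n (A ⧸ Ideal.span {(p : A)}) →+*
      A ⧸ Ideal.span {(p : A) ^ n}}
  (hΘ : ∀ n : ℕ, ∀ _hn : 1 ≤ n, ∀ w : WittVector p (A ⧸ Ideal.span {(p : A) ^ n}),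
      Θ n (WittVector.truncate n
          (WittVector.map (qfactor (dvd_pow_self (p : A) (Nat.one_le_iff_ne_zero.mp _hn))) w)) =
        ∑ i : Fin n, (p : A ⧸ Ideal.span {(p : A) ^ n}) ^ (i : ℕ) *
          (WittVector.truncate n w).coeff i ^ p ^ (n - (i : ℕ)))

include hΘ

lemma step_lemma (hfrob : ∀ y : K, ∃ x, x ^ p = y) (y : ↥(towerRing (p : A))) (n : ℕ)
    (x : WittVector p P)
    (hx : ∀ m, 1 ≤ m → m ≤ n → Θ m (WittVector.truncate m
      (WittVector.map (Perfection.coeff K p m) x)) = y.1 m) :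
    ∃ x' : WittVector p P,
      (∀ m, 1 ≤ m → m ≤ n + 1 → Θ m (WittVector.truncate m
        (WittVector.map (Perfection.coeff K p m) x')) = y.1 m) ∧
      ∃ w, x' = x + w * (p : WittVector p P) ^ n := by
  set e : A ⧸ Ideal.span {(p : A) ^ (n + 1)} :=
    y.1 (n + 1) - Θ (n + 1) (WittVector.truncate (n + 1)
      (WittVector.map (Perfection.coeff K p (n + 1)) x)) with hedef
  have hqe : qfactor (pow_dvd_pow (p : A) (Nat.le_succ n)) e = 0 := by
    rcases Nat.eq_zero_or_pos n with rfl | hn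
    · have := sub_pow_zero (p : A)
      exact Subsingleton.elim _ _
    · rw [hedef, map_sub, theta_compat hΘ x n, y.2 n, hx n (by omega) (by omega), sub_self]
  obtain ⟨ebar, hebar⟩ := Ideal.Quotient.mk_surjective e
  have hmem : ebar ∈ Ideal.span {(p : A) ^ n} := by
    rw [← Ideal.Quotient.eq_zero_iff_mem]
    rw [← qfactor_mk (pow_dvd_pow (p : A) (Nat.le_succ n)) ebar, hebar]
    exact hqe
  rw [Ideal.mem_span_singleton] at hmem
  obtain ⟨a, ha⟩ := hmem
  obtain ⟨b, hb⟩ := coeff0_surj hfrob (mkp a)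
  refine ⟨x + teichmuller p b * (p : WittVector p P) ^ n, ?_, teichmuller p b, rfl⟩
  intro m hm1 hm
  have hsplit : Θ m (WittVector.truncate m (WittVector.map (Perfection.coeff K p m)
      (x + teichmuller p b * (p : WittVector p P) ^ n))) =
      Θ m (WittVector.truncate m (WittVector.map (Perfection.coeff K p m) x)) +
      Θ m (WittVector.truncate m (WittVector.map (Perfection.coeff K p m)
        (teichmuller p b))) * (p : A ⧸ Ideal.span {(p : A) ^ m}) ^ n := by
    rw [map_add, map_add, map_add, map_mul, map_mul, map_mul,
      map_pow, map_pow, map_pow, map_natCast, map_natCast, map_natCast]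
  rcases Nat.lt_or_ge m (n + 1) with hlt | hge
  · -- m ≤ n : the correction dies
    have hz : (p : A ⧸ Ideal.span {(p : A) ^ m}) ^ n = 0 := by
      rw [← map_natCast (Ideal.Quotient.mk (Ideal.span {(p : A) ^ m})), ← map_pow,
        Ideal.Quotient.eq_zero_iff_mem]
      exact Ideal.mem_span_singleton.2 (pow_dvd_pow _ (by omega))
    rw [hsplit, hz, mul_zero, add_zero]
    exact hx m hm1 (by omega)
  · -- m = n + 1
    have hmn : m = n + 1 := by omega
    subst hmn
    set ℓ : A := Function.surjInv Ideal.Quotient.mk_surjective (Perfection.coeff K p (n + 1) b)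
      with hldef
    have hℓ : mkp ℓ = Perfection.coeff K p (n + 1) b :=
      Function.surjInv_eq Ideal.Quotient.mk_surjective _
    rw [hsplit, theta_teich hΘ (n + 1) (by omega) b ℓ hℓ]
    have hcorr : Ideal.Quotient.mk (Ideal.span {(p : A) ^ (n + 1)}) (ℓ ^ p ^ (n + 1)) *
        (p : A ⧸ Ideal.span {(p : A) ^ (n + 1)}) ^ n = e := by
      rw [← hebar, ha]
      rw [← map_natCast (Ideal.Quotient.mk (Ideal.span {(p : A) ^ (n + 1)})), ← map_pow,
        ← map_mul, Ideal.Quotient.eq]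
      have hpl : mkp (ℓ ^ p ^ (n + 1) - a) = 0 := by
        have h0 := coeffpow b 0 (n + 1)
        rw [zero_add] at h0
        rw [map_sub, map_pow, hℓ, ← h0, hb, sub_self]
      rw [Ideal.Quotient.eq_zero_iff_mem, Ideal.mem_span_singleton] at hpl
      obtain ⟨d, hd⟩ := hpl
      exact Ideal.mem_span_singleton.2 ⟨d, by linear_combination (p : A) ^ n * hd⟩
    rw [hcorr, hedef]
    ring

lemma theta_surj (hfrob : ∀ y : K, ∃ x, x ^ p = y)
    (θ : WittVector p P →+* ↥(towerRing (p : A)))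
    (hθ : ∀ n, 1 ≤ n → ∀ x, (θ x).1 n = Θ n (WittVector.truncate n
      (WittVector.map (Perfection.coeff K p n) x))) :
    Function.Surjective θ := by
  intro y
  let Q : ℕ → Type _ := fun n => {x : WittVector p P // ∀ m, 1 ≤ m → m ≤ n →
    Θ m (WittVector.truncate m (WittVector.map (Perfection.coeff K p m) x)) = y.1 m}
  let F : ∀ n, Q n := fun n => Nat.rec
    ⟨0, fun m hm1 hm0 => absurd (hm1.trans hm0) (Nat.not_succ_le_zero 0)⟩
    (fun n prev => ⟨(step_lemma hΘ hfrob y n prev.1 prev.2).choose,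
      (step_lemma hΘ hfrob y n prev.1 prev.2).choose_spec.1⟩) n
  have hF : ∀ n, ∃ w, (F (n + 1)).1 = (F n).1 + w * (p : WittVector p P) ^ n := fun n =>
    (step_lemma hΘ hfrob y n (F n).1 (F n).2).choose_spec.2
  obtain ⟨L, hL⟩ := wv_limit (fun n => (F n).1) hF
  refine ⟨L, Subtype.ext (funext fun n => ?_)⟩
  match n with
  | 0 =>
    have := sub_pow_zero (p : A)
    exact Subsingleton.elim _ _
  | (m + 1) =>
    show (θ L).1 (m + 1) = y.1 (m + 1)
    rw [hθ (m + 1) (by omega) L]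
    obtain ⟨w, hw⟩ := hL (m + 1)
    rw [hw, map_add, map_add, map_add, map_mul, map_mul, map_mul,
      map_pow, map_pow, map_pow, map_natCast, map_natCast, map_natCast]
    have hz : (p : A ⧸ Ideal.span {(p : A) ^ (m + 1)}) ^ (m + 1) = 0 := by
      rw [← map_natCast (Ideal.Quotient.mk (Ideal.span {(p : A) ^ (m + 1)})), ← map_pow,
        Ideal.Quotient.eq_zero_iff_mem]
      exact Ideal.mem_span_singleton.2 dvd_rfl
    rw [hz, mul_zero, add_zero]
    exact (F (m + 1)).2 (m + 1) (by omega) (by omega)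

lemma theta_ker (hp_nzd : (p : A) ∈ nonZeroDivisors A)
    (hintcl : ∀ x : Localization.Away (p : A), IsIntegral A x →
      ∃ a : A, algebraMap A (Localization.Away (p : A)) a = x)
    {pseq : ℕ → A} (hpseq0 : pseq 0 = p) (hpseqS : ∀ n, pseq (n + 1) ^ p = pseq n)
    {ϖ : P} (hϖ : ∀ n, Perfection.coeff K p n ϖ = mkp (pseq n))
    (θ : WittVector p P →+* ↥(towerRing (p : A)))
    (hθ : ∀ n, 1 ≤ n → ∀ x, (θ x).1 n = Θ n (WittVector.truncate n
      (WittVector.map (Perfection.coeff K p n) x))) :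
    ∀ w, θ w = 0 ↔ ∃ z, w = (teichmuller p ϖ - (p : WittVector p P)) * z := by
  intro x
  constructor
  · intro hx
    have hTm : ∀ m, 1 ≤ m → Θ m (WittVector.truncate m
        (WittVector.map (Perfection.coeff K p m) x)) = 0 := by
      intro m hm
      rw [← hθ m hm x, hx]
      rfl
    choose Z W hZW using fun n => Mprime hΘ hp_nzd hintcl hpseq0 hpseqS hϖ n x hTm
    have hstep : ∀ n, ∃ u, Z (n + 1) = Z n + u * (p : WittVector p P) ^ n := by
      intro n
      have hxi : (teichmuller p ϖ - (p : WittVector p P)) * (Z (n + 1) - Z n) =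
          (W n - W (n + 1) * (p : WittVector p P)) * (p : WittVector p P) ^ n := by
        linear_combination hZW n - hZW (n + 1)
      obtain ⟨u, hu⟩ := xi_cancel hp_nzd hpseq0 hpseqS hϖ n (Z (n + 1) - Z n) ⟨_, hxi⟩
      exact ⟨u, by linear_combination hu⟩
    obtain ⟨L, hL⟩ := wv_limit Z hstep
    have hsep : ∀ n, ∃ v, x - (teichmuller p ϖ - (p : WittVector p P)) * L =
        v * (p : WittVector p P) ^ n := by
      intro n
      obtain ⟨v, hv⟩ := hL n
      refine ⟨W n - (teichmuller p ϖ - (p : WittVector p P)) * v, ?_⟩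
      linear_combination hZW n - (teichmuller p ϖ - (p : WittVector p P)) * hv
    have := wv_separated _ hsep
    exact ⟨L, by linear_combination this⟩
  · rintro ⟨z, rfl⟩
    apply Subtype.ext
    funext n
    match n with
    | 0 =>
      have := sub_pow_zero (p : A)
      exact Subsingleton.elim _ _
    | (m + 1) =>
      show (θ _).1 (m + 1) = (0 : ↥(towerRing (p : A))).1 (m + 1)
      rw [hθ (m + 1) (by omega) _, map_mul, map_mul, map_mul,
        theta_xi_zero hΘ hpseq0 hpseqS hϖ (m + 1) (by omega), zero_mul]
      rfl

end Stage9
/-- Fontaine's theta: let `p` be a prime, `A` a `ℤ_(p)`-algebra such that `p` is a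
non-zero-divisor in `A`, `A` is integrally closed in `A[1/p]`, the Frobenius of `A/pA` is
surjective, and `p` admits a compatible system of `p`-power roots `(p_n)`.  Let
`ϖ ∈ A^♭` have components `p_n mod p` and set `ξ = [ϖ] - p ∈ W(A^♭)`.  Then there is a
unique ring homomorphism `θ : W(A^♭) → Â = lim_n A/p^nA` whose composite with each
projection `Â → A/p^nA` (`n ≥ 1`) equals `θ_n ∘ ν_n`, and the sequence
`0 → W(A^♭) → W(A^♭) → Â → 0` (multiplication by `ξ`, then `θ`) is exact. -/
theorem statement17 (p : ℕ) [Fact p.Prime] {A : Type*} [CommRing A]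
    (hA : ∀ k : ℕ, ¬ p ∣ k → IsUnit (k : A))
    [Nontrivial (A ⧸ Ideal.span {(p : A)})] [CharP (A ⧸ Ideal.span {(p : A)}) p]
    (hp_nzd : (p : A) ∈ nonZeroDivisors A)
    (hintcl : ∀ x : Localization.Away (p : A), IsIntegral A x →
      ∃ a : A, algebraMap A (Localization.Away (p : A)) a = x)
    (hfrob : ∀ y : A ⧸ Ideal.span {(p : A)}, ∃ x, x ^ p = y)
    (pseq : ℕ → A) (hpseq0 : pseq 0 = p) (hpseqS : ∀ n, pseq (n + 1) ^ p = pseq n)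
    (ϖ : Perfection (A ⧸ Ideal.span {(p : A)}) p)
    (hϖ : ∀ n, Perfection.coeff (A ⧸ Ideal.span {(p : A)}) p n ϖ =
      Ideal.Quotient.mk _ (pseq n))
    (Θ : ∀ n : ℕ, TruncatedWittVector p n (A ⧸ Ideal.span {(p : A)}) →+*
      A ⧸ Ideal.span {(p : A) ^ n})
    (hΘ : ∀ n : ℕ, ∀ _hn : 1 ≤ n, ∀ w : WittVector p (A ⧸ Ideal.span {(p : A) ^ n}),
      Θ n (WittVector.truncate n
          (WittVector.map (qfactor (dvd_pow_self (p : A) (by omega))) w)) =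
        ∑ i : Fin n, (p : A ⧸ Ideal.span {(p : A) ^ n}) ^ (i : ℕ) *
          (WittVector.truncate n w).coeff i ^ p ^ (n - (i : ℕ))) :
    (∃! θ : WittVector p (Perfection (A ⧸ Ideal.span {(p : A)}) p) →+*
        ↥(towerRing (p : A)),
      ∀ n, 1 ≤ n → ∀ x, (θ x).1 n =
        Θ n (WittVector.truncate n
          (WittVector.map (Perfection.coeff (A ⧸ Ideal.span {(p : A)}) p n) x))) ∧
    (∀ θ : WittVector p (Perfection (A ⧸ Ideal.span {(p : A)}) p) →+*
        ↥(towerRing (p : A)),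
      (∀ n, 1 ≤ n → ∀ x, (θ x).1 n =
        Θ n (WittVector.truncate n
          (WittVector.map (Perfection.coeff (A ⧸ Ideal.span {(p : A)}) p n) x))) →
      (Function.Injective fun w : WittVector p (Perfection (A ⧸ Ideal.span {(p : A)}) p) =>
        (WittVector.teichmuller p ϖ - p) * w) ∧
      Function.Surjective θ ∧
      (∀ w, θ w = 0 ↔ ∃ z, w = (WittVector.teichmuller p ϖ - p) * z)) := by
  constructor
  · exact ⟨thetaHom Θ hΘ, thetaHom_prop hΘ,
      fun θ' hθ' => theta_unique θ' (thetaHom Θ hΘ) hθ' (thetaHom_prop hΘ)⟩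
  · intro θ hθ
    exact ⟨xi_inj hp_nzd hpseq0 hpseqS hϖ, theta_surj hΘ hfrob θ hθ,
      theta_ker hΘ hp_nzd hintcl hpseq0 hpseqS hϖ θ hθ⟩
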